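/- Let G be a finite bipartite graph with a fractional 2-matching f : E(G) → {0, 1/m, ..., 1} for m odd, such that for each vertex x there is a partition of the edges incident to x into two sets on each of which the f-values sum to 1. Then G admits a 2-factor. -/

import Mathlib

open SimpleGraph Finset

/-- A fractional perfect matching of a locally finite graph: edge values in `[0,1]`
summing to `1` at every vertex. -/
def IsFPM {V : Type*} (G : SimpleGraph V) [G.LocallyFinite] (f : Sym2 V → ℝ) : Prop :=
  (∀ e, 0 ≤ f e ∧ f e ≤ 1) ∧ ∀ x : V, ∑ y ∈ G.neighborFinset x, f s(x, y) = 1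

/-- The support of a fractional perfect matching: the subgraph of edges `e`
with `0 < f e < 1`. -/
def fSupp {V : Type*} (G : SimpleGraph V) (f : Sym2 V → ℝ) : SimpleGraph V :=
  SimpleGraph.fromEdgeSet {e | e ∈ G.edgeSet ∧ 0 < f e ∧ f e < 1}

section Aux

variable {V : Type*} [Fintype V] [DecidableEq V] (G : SimpleGraph V) [DecidableRel G.Adj]

/-- The `i`-th part of the partition of the neighborhood of `x`. -/
private def sideF (S : V → Finset V) (x : V) (i : Bool) : Finset V :=
  if i then G.neighborFinset x \ S x else S x

/-- The index of the part containing `y` among the parts at `x`. -/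
private def idxF (S : V → Finset V) (x y : V) : Bool := decide (y ∉ S x)

private lemma sideF_subset {S : V → Finset V} (hS : ∀ x, S x ⊆ G.neighborFinset x) (x : V)
    (i : Bool) : sideF G S x i ⊆ G.neighborFinset x := by
  cases i <;> simp [sideF, hS x, Finset.sdiff_subset]

private lemma mem_sideF_idx {S : V → Finset V} {x y : V} (hy : y ∈ G.neighborFinset x) :
    y ∈ sideF G S x (idxF S x y) := by
  by_cases h : y ∈ S x <;> simp [sideF, idxF, h, hy]

private lemma idx_eq_of_mem_sideF {S : V → Finset V} {x y : V} {i : Bool}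
    (h : y ∈ sideF G S x i) : idxF S x y = i := by
  unfold sideF idxF at *
  cases i <;> simp_all

/-- The neighborhoods in the auxiliary bipartite graph. -/
private def tF (S : V → Finset V) (a : V × Bool) : Finset (V × Bool) :=
  (sideF G S a.1 a.2).image fun y => (y, idxF S y a.1)

private lemma mem_tF {S : V → Finset V} {a b : V × Bool} :
    b ∈ tF G S a ↔ b.1 ∈ sideF G S a.1 a.2 ∧ b.2 = idxF S b.1 a.1 := by
  constructor
  · intro h
    obtain ⟨y, hy, rfl⟩ := Finset.mem_image.mp h
    exact ⟨hy, rfl⟩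
  · intro ⟨h1, h2⟩
    exact Finset.mem_image.mpr ⟨b.1, h1, by rw [← h2]⟩

end Aux

theorem stmt_11 {V : Type*} [Fintype V] [DecidableEq V] (G : SimpleGraph V) [DecidableRel G.Adj]
    (hbip : G.Colorable 2) (m : ℕ) (hm : Odd m)
    (f : Sym2 V → ℝ) (hvals : ∀ e, ∃ i ≤ m, f e = (i : ℝ) / m)
    (h2match : ∀ x : V, ∑ y ∈ G.neighborFinset x, f s(x, y) = 2)
    (hpart : ∀ x : V, ∃ S ⊆ G.neighborFinset x,
      (∑ y ∈ S, f s(x, y)) = 1 ∧ (∑ y ∈ G.neighborFinset x \ S, f s(x, y)) = 1) :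
    ∃ H : SimpleGraph V, H ≤ G ∧ ∀ v, (H.neighborSet v).ncard = 2 := by
  classical
  obtain ⟨C⟩ := hbip
  choose S hSsub hSone hStwo using hpart
  -- nonnegativity of f
  have hf0 : ∀ e, 0 ≤ f e := by
    intro e
    obtain ⟨i, _, he⟩ := hvals e
    rw [he]; positivity
  have hsum : ∀ x (i : Bool), ∑ y ∈ sideF G S x i, f s(x, y) = 1 := by
    intro x i
    cases i
    · simpa [sideF] using hSone x
    · simpa [sideF] using hStwo x
  -- two-coloring facts
  have hC2 : ∀ v : V, C v = 0 ∨ C v = 1 := by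
    intro v
    have := (C v).isLt
    omega
  have hCadj : ∀ {x y : V}, G.Adj x y → C x = 0 → C y = 1 := by
    intro x y hxy hx
    rcases hC2 y with hy | hy
    · exact absurd (hx.trans hy.symm) (C.valid hxy)
    · exact hy
  -- adjacency from side membership
  have hside_adj : ∀ {x y : V} {i : Bool}, y ∈ sideF G S x i → G.Adj x y := by
    intro x y i h
    exact (SimpleGraph.mem_neighborFinset _ _ _).mp (sideF_subset G hSsub x i h)
  -- sides are disjoint
  have hside_ne : ∀ {x y z : V}, y ∈ sideF G S x false → z ∈ sideF G S x true → y ≠ z := by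
    intro x y z hy hz heq
    apply Bool.false_ne_true
    rw [← idx_eq_of_mem_sideF G hy, heq, idx_eq_of_mem_sideF G hz]
  ----------------------------------------------------------------
  -- Hall's condition for the auxiliary bipartite graph
  ----------------------------------------------------------------
  set A := {x : V // C x = 0} × Bool with hA
  have hall : ∀ s : Finset A, s.card ≤ (s.biUnion (fun a => tF G S (a.1.1, a.2))).card := by
    intro s
    set U := s.biUnion (fun a : A => tF G S (a.1.1, a.2)) with hU
    have key : (s.card : ℝ) = ∑ a ∈ s, ∑ b ∈ tF G S (a.1.1, a.2), f s(a.1.1, b.1) := by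
      rw [Finset.card_eq_sum_ones, Nat.cast_sum]
      refine Finset.sum_congr rfl fun a _ => ?_
      have : ∑ b ∈ tF G S (a.1.1, a.2), f s(a.1.1, b.1)
          = ∑ y ∈ sideF G S a.1.1 a.2, f s(a.1.1, y) := by
        rw [tF, Finset.sum_image]
        intro y _ z _ h
        exact (Prod.mk.injEq _ _ _ _).mp h |>.1
      rw [this, hsum]; norm_num
    -- swap the double sum
    have swap : ∑ a ∈ s, ∑ b ∈ tF G S (a.1.1, a.2), f s(a.1.1, b.1)
        = ∑ b ∈ U, ∑ a ∈ s.filter (fun a => b ∈ tF G S (a.1.1, a.2)), f s(a.1.1, b.1) := by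
      have step1 : ∀ a ∈ s, ∑ b ∈ tF G S (a.1.1, a.2), f s(a.1.1, b.1)
          = ∑ b ∈ U, (if b ∈ tF G S (a.1.1, a.2) then f s(a.1.1, b.1) else 0) := by
        intro a ha
        rw [← Finset.sum_filter]
        congr 1
        ext b
        simp only [Finset.mem_filter, hU, Finset.mem_biUnion]
        constructor
        · intro hb; exact ⟨⟨a, ha, hb⟩, hb⟩
        · intro hb; exact hb.2
      rw [Finset.sum_congr rfl step1, Finset.sum_comm]
      exact Finset.sum_congr rfl fun b _ => (Finset.sum_filter _ _).symm
    have bound : ∀ b ∈ U, ∑ a ∈ s.filter (fun a => b ∈ tF G S (a.1.1, a.2)), f s(a.1.1, b.1) ≤ 1 := by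
      intro b _
      have hinj : ∀ a₁ ∈ s.filter (fun a => b ∈ tF G S (a.1.1, a.2)),
          ∀ a₂ ∈ s.filter (fun a => b ∈ tF G S (a.1.1, a.2)), a₁.1.1 = a₂.1.1 → a₁ = a₂ := by
        intro a₁ h₁ a₂ h₂ he
        have hb₁ := (mem_tF G).mp (Finset.mem_filter.mp h₁).2
        have hb₂ := (mem_tF G).mp (Finset.mem_filter.mp h₂).2
        have : a₁.2 = a₂.2 := by
          rw [← idx_eq_of_mem_sideF G hb₁.1, ← idx_eq_of_mem_sideF G hb₂.1, he]
        exact Prod.ext (Subtype.ext he) this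
      have himg : (s.filter (fun a => b ∈ tF G S (a.1.1, a.2))).image (fun a => a.1.1)
          ⊆ sideF G S b.1 b.2 := by
        intro x hx
        obtain ⟨a, ha, rfl⟩ := Finset.mem_image.mp hx
        have hb := (mem_tF G).mp (Finset.mem_filter.mp ha).2
        have hadj : G.Adj a.1.1 b.1 := hside_adj hb.1
        have hmem : a.1.1 ∈ G.neighborFinset b.1 :=
          (SimpleGraph.mem_neighborFinset _ _ _).mpr hadj.symm
        have := mem_sideF_idx (G := G) (S := S) hmem
        rwa [← hb.2] at this
      calc ∑ a ∈ s.filter (fun a => b ∈ tF G S (a.1.1, a.2)), f s(a.1.1, b.1)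
          = ∑ x ∈ (s.filter (fun a => b ∈ tF G S (a.1.1, a.2))).image (fun a => a.1.1),
              f s(x, b.1) := by
            rw [Finset.sum_image fun a h a' h' hh => hinj a h a' h' hh]
        _ ≤ ∑ x ∈ sideF G S b.1 b.2, f s(x, b.1) :=
            Finset.sum_le_sum_of_subset_of_nonneg himg (fun _ _ _ => hf0 _)
        _ = ∑ x ∈ sideF G S b.1 b.2, f s(b.1, x) := by
            refine Finset.sum_congr rfl fun x _ => ?_
            rw [Sym2.eq_swap]
        _ = 1 := hsum b.1 b.2
    have : (s.card : ℝ) ≤ (U.card : ℝ) := by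
      rw [key, swap]
      calc ∑ b ∈ U, ∑ a ∈ s.filter (fun a => b ∈ tF G S (a.1.1, a.2)), f s(a.1.1, b.1)
          ≤ ∑ _b ∈ U, (1 : ℝ) := Finset.sum_le_sum bound
        _ = U.card := by simp
    exact_mod_cast this
  obtain ⟨g, hginj, hgmem⟩ :=
    (Finset.all_card_le_biUnion_card_iff_exists_injective
      (fun a : A => tF G S (a.1.1, a.2))).mp hall
  -- facts about g
  have hg_side : ∀ a : A, (g a).1 ∈ sideF G S a.1.1 a.2 := fun a =>
    ((mem_tF G (a := (a.1.1, a.2))).mp (hgmem a)).1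
  have hg_idx : ∀ a : A, (g a).2 = idxF S (g a).1 a.1.1 := fun a =>
    ((mem_tF G (a := (a.1.1, a.2))).mp (hgmem a)).2
  have hg_adj : ∀ a : A, G.Adj a.1.1 (g a).1 := fun a => hside_adj (hg_side a)
  have hg_col : ∀ a : A, C (g a).1 = 1 := fun a => hCadj (hg_adj a) a.1.2
  ----------------------------------------------------------------
  -- the two color classes have equal size, so g is surjective onto the other side
  ----------------------------------------------------------------
  have hcard : Fintype.card {x : V // C x = 0} = Fintype.card {y : V // C y = 1} := by
    have hFdef : ∀ x y : V, (if G.Adj x y then f s(x, y) else 0)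
        = (if G.Adj y x then f s(y, x) else 0) := by
      intro x y
      by_cases h : G.Adj x y
      · simp [h, h.symm, Sym2.eq_swap]
      · have h' : ¬ G.Adj y x := fun h' => h h'.symm
        simp [h, h']
    have expand : ∀ x : V, ∑ y ∈ G.neighborFinset x, f s(x, y)
        = ∑ y : V, (if G.Adj x y then f s(x, y) else 0) := by
      intro x
      rw [SimpleGraph.neighborFinset_eq_filter, Finset.sum_filter]
    have pointwise : ∀ x y : V,
        (if C x = 0 then (if G.Adj x y then f s(x, y) else 0) else 0)
        = (if C y = 1 then (if G.Adj x y then f s(x, y) else 0) else 0) := by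
      intro x y
      by_cases hadj : G.Adj x y
      · rcases hC2 x with hx | hx <;> rcases hC2 y with hy | hy
        · exact absurd (hx.trans hy.symm) (C.valid hadj)
        · simp [hx, hy]
        · simp [hx, hy]
        · exact absurd (hx.trans hy.symm) (C.valid hadj)
      · simp [hadj]
    have sum0 : ((Finset.univ.filter (fun x : V => C x = 0)).card : ℝ) * 2
        = ∑ x ∈ Finset.univ.filter (fun x : V => C x = 0), ∑ y : V,
            (if G.Adj x y then f s(x, y) else 0) := by
      rw [Finset.sum_congr rfl (fun x _ => (expand x).symm),
        Finset.sum_congr rfl (fun x _ => h2match x)]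
      simp [mul_comm]
    have sum1 : ((Finset.univ.filter (fun y : V => C y = 1)).card : ℝ) * 2
        = ∑ y ∈ Finset.univ.filter (fun y : V => C y = 1), ∑ x : V,
            (if G.Adj y x then f s(y, x) else 0) := by
      rw [Finset.sum_congr rfl (fun y _ => (expand y).symm),
        Finset.sum_congr rfl (fun y _ => h2match y)]
      simp [mul_comm]
    have eq01 : ∑ x ∈ Finset.univ.filter (fun x : V => C x = 0), ∑ y : V,
            (if G.Adj x y then f s(x, y) else 0)
        = ∑ y ∈ Finset.univ.filter (fun y : V => C y = 1), ∑ x : V,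
            (if G.Adj y x then f s(y, x) else 0) := by
      rw [Finset.sum_filter, Finset.sum_filter]
      have lhs : ∑ x : V, (if C x = 0 then ∑ y : V, (if G.Adj x y then f s(x, y) else 0) else 0)
          = ∑ x : V, ∑ y : V, (if C x = 0 then (if G.Adj x y then f s(x, y) else 0) else 0) := by
        refine Finset.sum_congr rfl fun x _ => ?_
        split <;> simp
      rw [lhs]
      rw [Finset.sum_congr rfl fun x _ => Finset.sum_congr rfl fun y _ => pointwise x y]
      rw [Finset.sum_comm]
      refine Finset.sum_congr rfl fun y _ => ?_
      split
      · refine Finset.sum_congr rfl fun x _ => hFdef x y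
      · simp
    have : ((Finset.univ.filter (fun x : V => C x = 0)).card : ℝ)
        = ((Finset.univ.filter (fun y : V => C y = 1)).card : ℝ) := by
      have := sum0.trans (eq01.trans sum1.symm)
      linarith
    have hnat : (Finset.univ.filter (fun x : V => C x = 0)).card
        = (Finset.univ.filter (fun y : V => C y = 1)).card := by exact_mod_cast this
    simp only [Fintype.card_subtype]
    exact hnat
  -- refine g to a bijection onto {y // C y = 1} × Bool
  set B := {y : V // C y = 1} × Bool with hB
  let g' : A → B := fun a => (⟨(g a).1, hg_col a⟩, (g a).2)
  have hg'inj : Function.Injective g' := by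
    intro a₁ a₂ h
    apply hginj
    have h1 : (g a₁).1 = (g a₂).1 := congrArg (fun b : B => b.1.1) h
    have h2 : (g a₁).2 = (g a₂).2 := congrArg (fun b : B => b.2) h
    exact Prod.ext h1 h2
  have hcardAB : Fintype.card A = Fintype.card B := by
    show Fintype.card ({x : V // C x = 0} × Bool) = Fintype.card ({y : V // C y = 1} × Bool)
    rw [Fintype.card_prod, Fintype.card_prod, hcard]
  have hg'surj : Function.Surjective g' :=
    ((Fintype.bijective_iff_injective_and_card g').mpr ⟨hg'inj, hcardAB⟩).2
  ----------------------------------------------------------------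
  -- construct the 2-factor
  ----------------------------------------------------------------
  let Mrel : V → V → Prop := fun x y => ∃ (hx : C x = 0) (i : Bool), (g (⟨x, hx⟩, i)).1 = y
  have hMadj : ∀ {x y : V}, Mrel x y → G.Adj x y := by
    intro x y ⟨hx, i, hgi⟩
    rw [← hgi]; exact hg_adj (⟨x, hx⟩, i)
  let H : SimpleGraph V :=
    { Adj := fun u v => (Mrel u v ∨ Mrel v u) ∧ G.Adj u v
      symm := by
        constructor
        intro u v ⟨h1, h2⟩
        exact ⟨h1.symm, h2.symm⟩
      loopless := ⟨fun v h => G.loopless.irrefl v h.2⟩ }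
  have hHadj : ∀ u v : V, H.Adj u v ↔ (Mrel u v ∨ Mrel v u) ∧ G.Adj u v := fun _ _ => Iff.rfl
  refine ⟨H, fun u v h => h.2, ?_⟩
  -- degree computation
  intro v
  have key : ∀ hv : C v = 0, ∀ {u : V}, ¬ Mrel u v := by
    intro hv u ⟨hu, i, hgi⟩
    have := hg_col (⟨u, hu⟩, i)
    rw [hgi, hv] at this
    exact absurd this (by decide)
  rcases hC2 v with hv | hv
  · -- C v = 0 : neighbors are g (v, false) and g (v, true)
    set y₀ := (g (⟨v, hv⟩, false)).1 with hy₀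
    set y₁ := (g (⟨v, hv⟩, true)).1 with hy₁
    have hne : y₀ ≠ y₁ := hside_ne (hg_side (⟨v, hv⟩, false)) (hg_side (⟨v, hv⟩, true))
    have hset : H.neighborSet v = {y₀, y₁} := by
      ext u
      simp only [SimpleGraph.mem_neighborSet, hHadj, Set.mem_insert_iff, Set.mem_singleton_iff]
      constructor
      · rintro ⟨hM | hM, hadj⟩
        · obtain ⟨hv', i, hgi⟩ := hM
          cases i
          · left; rw [← hgi, hy₀]
          · right; rw [← hgi, hy₁]
        · exact absurd hM (key hv)
      · rintro (rfl | rfl)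
        · exact ⟨Or.inl ⟨hv, false, rfl⟩, hg_adj (⟨v, hv⟩, false)⟩
        · exact ⟨Or.inl ⟨hv, true, rfl⟩, hg_adj (⟨v, hv⟩, true)⟩
    rw [hset]
    exact Set.ncard_pair hne
  · -- C v = 1 : neighbors are the two preimages of (v, false) and (v, true)
    obtain ⟨a₀, ha₀⟩ := hg'surj (⟨v, hv⟩, false)
    obtain ⟨a₁, ha₁⟩ := hg'surj (⟨v, hv⟩, true)
    have hga₀ : g a₀ = (v, false) := by
      have h1 : (g a₀).1 = v := congrArg (fun b : B => b.1.1) ha₀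
      have h2 : (g a₀).2 = false := congrArg (fun b : B => b.2) ha₀
      exact Prod.ext h1 h2
    have hga₁ : g a₁ = (v, true) := by
      have h1 : (g a₁).1 = v := congrArg (fun b : B => b.1.1) ha₁
      have h2 : (g a₁).2 = true := congrArg (fun b : B => b.2) ha₁
      exact Prod.ext h1 h2
    set x₀ := a₀.1.1 with hx₀
    set x₁ := a₁.1.1 with hx₁
    -- x_t lies in side t of v
    have hmem : ∀ (a : A) (t : Bool), g a = (v, t) → a.1.1 ∈ sideF G S v t := by
      intro a t hga
      have hidx := hg_idx a
      rw [hga] at hidx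
      have hadj : G.Adj v a.1.1 := by
        have := hg_adj a
        rw [show (g a).1 = v from by rw [hga]] at this
        exact this.symm
      have hmem' : a.1.1 ∈ G.neighborFinset v := (SimpleGraph.mem_neighborFinset _ _ _).mpr hadj
      have := mem_sideF_idx (G := G) (S := S) hmem'
      rwa [← hidx] at this
    have hne : x₀ ≠ x₁ := hside_ne (hmem a₀ false hga₀) (hmem a₁ true hga₁)
    have hset : H.neighborSet v = {x₀, x₁} := by
      ext u
      simp only [SimpleGraph.mem_neighborSet, hHadj, Set.mem_insert_iff, Set.mem_singleton_iff]
      constructor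
      · rintro ⟨hM | hM, hadj⟩
        · obtain ⟨hv', _, _⟩ := hM
          rw [hv'] at hv
          exact absurd hv (by decide)
        · obtain ⟨hu, i, hgi⟩ := hM
          -- g (⟨u,hu⟩, i) = (v, j) for some j; by injectivity it equals a_j
          set a : A := (⟨u, hu⟩, i) with ha
          have hsnd : (g a).2 = idxF S (g a).1 u := hg_idx a
          rw [hgi] at hsnd
          have : g a = (v, idxF S v u) := Prod.ext hgi hsnd
          cases hj : idxF S v u
          · rw [hj] at this
            have : a = a₀ := hginj (this.trans hga₀.symm)
            left; rw [hx₀, ← this]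
          · rw [hj] at this
            have : a = a₁ := hginj (this.trans hga₁.symm)
            right; rw [hx₁, ← this]
      · rintro (rfl | rfl)
        · refine ⟨Or.inr ⟨a₀.1.2, a₀.2, ?_⟩, ?_⟩
          · rw [show ((⟨a₀.1.1, a₀.1.2⟩ : {x : V // C x = 0}), a₀.2) = a₀ from rfl, hga₀]
          · have hadj0 := (hg_adj a₀).symm
            rw [show (g a₀).1 = v from by rw [hga₀]] at hadj0
            exact hadj0
        · refine ⟨Or.inr ⟨a₁.1.2, a₁.2, ?_⟩, ?_⟩
          · rw [show ((⟨a₁.1.1, a₁.1.2⟩ : {x : V // C x = 0}), a₁.2) = a₁ from rfl, hga₁]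
          · have hadj1 := (hg_adj a₁).symm
            rw [show (g a₁).1 = v from by rw [hga₁]] at hadj1
            exact hadj1
    rw [hset]
    exact Set.ncard_pair hne
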